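/- For every γ > 0, the function f is strictly monotonically increasing on the interval (0, π/(2γ)) and maps this interval bijectively onto (0, ∞). -/

import Mathlib

open Real Set Filter Topology

/-- For every `γ > 0`, the function
`f(λ₀) = (1/2)·(γ/cos²(λ₀γ) − sin(λ₀γ)/(λ₀·cos(λ₀γ)))`
is strictly monotonically increasing on `(0, π/(2γ))` and maps this
interval bijectively onto `(0, ∞)`. -/
theorem stmt_0 (γ : ℝ) (hγ : 0 < γ)
    (f : ℝ → ℝ)
    (hf : ∀ l : ℝ, f l = (1/2) * (γ / (Real.cos (l * γ))^2
      - Real.sin (l * γ) / (l * Real.cos (l * γ)))) :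
    StrictMonoOn f (Ioo 0 (π / (2 * γ))) ∧
      BijOn f (Ioo 0 (π / (2 * γ))) (Ioi 0) := by
  have hπ := Real.pi_pos
  set c : ℝ := π / (2 * γ) with hc
  have hc0 : 0 < c := by positivity
  have hcγ : c * γ = π / 2 := by
    rw [hc]; field_simp
  have hγ' : γ ≠ 0 := ne_of_gt hγ
  -- basic facts on the interval
  have basic : ∀ l ∈ Ioo (0:ℝ) c, 0 < l ∧ 0 < l * γ ∧ l * γ < π/2 ∧
      0 < Real.cos (l*γ) ∧ 0 < Real.sin (l*γ) ∧ Real.sin (l*γ) < l*γ ∧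
      (l*γ) * Real.cos (l*γ) < Real.sin (l*γ) := by
    intro l hl
    obtain ⟨hl0, hlc⟩ := hl
    have hx0 : 0 < l * γ := mul_pos hl0 hγ
    have hx2 : l * γ < π/2 := by
      calc l * γ < c * γ := by nlinarith
      _ = π/2 := hcγ
    have hco : 0 < Real.cos (l*γ) := Real.cos_pos_of_mem_Ioo ⟨by linarith, hx2⟩
    have hsi : 0 < Real.sin (l*γ) := Real.sin_pos_of_pos_of_lt_pi hx0 (by linarith)
    have hslt : Real.sin (l*γ) < l*γ := Real.sin_lt hx0
    have htan := Real.lt_tan hx0 hx2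
    rw [Real.tan_eq_sin_div_cos] at htan
    exact ⟨hl0, hx0, hx2, hco, hsi, hslt, (lt_div_iff₀ hco).mp htan⟩
  -- derivative
  have hderiv : ∀ l ∈ Ioo (0:ℝ) c, HasDerivAt (fun l : ℝ => (1/2) * (γ / (Real.cos (l * γ))^2
      - Real.sin (l * γ) / (l * Real.cos (l * γ))))
      ((2*(l*γ)^2 * Real.sin (l*γ) + Real.sin (l*γ) * (Real.cos (l*γ))^2 - (l*γ) * Real.cos (l*γ))
        / (2*l^2*(Real.cos (l*γ))^3)) l := by
    intro l hl
    obtain ⟨hl0, hx0, hx2, hco, hsi, hslt, hxc⟩ := basic l hl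
    have hl0' : l ≠ 0 := ne_of_gt hl0
    have hco' : Real.cos (l*γ) ≠ 0 := ne_of_gt hco
    have hmul : HasDerivAt (fun l : ℝ => l * γ) γ l := by
      simpa using (hasDerivAt_id l).mul_const γ
    have hcosD := hmul.cos
    have hsinD := hmul.sin
    have hpow := hcosD.pow 2
    have h1 := (hasDerivAt_const l γ).div hpow (pow_ne_zero 2 hco')
    have hden := (hasDerivAt_id l).mul hcosD
    have h2 := hsinD.div hden (mul_ne_zero hl0' hco')
    have h3 := (h1.sub h2).const_mul (1/2 : ℝ)
    refine h3.congr_deriv ?_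
    symm
    have hpy : Real.sin (l*γ)^2 = 1 - Real.cos (l*γ)^2 := by
      have := Real.sin_sq_add_cos_sq (l*γ); linarith
    simp only [Pi.pow_apply, Pi.mul_apply, id]
    field_simp
    ring_nf
    linear_combination (l*γ*Real.cos (l*γ)^2) * hpy
  -- positivity of the derivative
  have hDpos : ∀ l ∈ Ioo (0:ℝ) c,
      0 < (2*(l*γ)^2 * Real.sin (l*γ) + Real.sin (l*γ) * (Real.cos (l*γ))^2 - (l*γ) * Real.cos (l*γ))
        / (2*l^2*(Real.cos (l*γ))^3) := by
    intro l hl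
    obtain ⟨hl0, hx0, hx2, hco, hsi, hslt, hxc⟩ := basic l hl
    have hpy : Real.sin (l*γ)^2 = 1 - Real.cos (l*γ)^2 := by
      have := Real.sin_sq_add_cos_sq (l*γ); linarith
    have hco1 : Real.cos (l*γ) ≤ 1 := Real.cos_le_one _
    apply div_pos
    · nlinarith [mul_lt_mul_of_pos_right hxc (pow_pos hco 2),
        mul_le_mul_of_nonneg_left (mul_le_of_le_one_left (sq_nonneg (Real.sin (l*γ))) hco1) hx0.le,
        mul_lt_mul_of_pos_left (mul_lt_mul_of_pos_left hslt hsi) hx0,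
        mul_pos hx0 hsi, mul_pos hx0 hco, hpy]
    · positivity
  have hcont : ContinuousOn (fun l : ℝ => (1/2) * (γ / (Real.cos (l * γ))^2
      - Real.sin (l * γ) / (l * Real.cos (l * γ)))) (Ioo 0 c) :=
    fun l hl => (hderiv l hl).continuousAt.continuousWithinAt
  have hmono : StrictMonoOn (fun l : ℝ => (1/2) * (γ / (Real.cos (l * γ))^2
      - Real.sin (l * γ) / (l * Real.cos (l * γ)))) (Ioo 0 c) := by
    apply strictMonoOn_of_deriv_pos (convex_Ioo 0 c) hcont
    intro l hl
    rw [interior_Ioo] at hl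
    rw [(hderiv l hl).deriv]
    exact hDpos l hl
  have hmonof : StrictMonoOn f (Ioo 0 c) := by
    intro a ha b hb hab
    rw [hf a, hf b]
    exact hmono ha hb hab
  -- maps to
  have hmaps : MapsTo f (Ioo 0 c) (Ioi 0) := by
    intro l hl
    obtain ⟨hl0, hx0, hx2, hco, hsi, hslt, hxc⟩ := basic l hl
    simp only [mem_Ioi]
    rw [hf l]
    have heq : (1/2 : ℝ) * (γ / (Real.cos (l * γ))^2 - Real.sin (l * γ) / (l * Real.cos (l * γ)))
        = (l*γ - Real.sin (l*γ) * Real.cos (l*γ)) / (2*l*(Real.cos (l*γ))^2) := by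
      field_simp
    rw [heq]
    apply div_pos
    · nlinarith [Real.cos_le_one (l*γ)]
    · positivity
  -- limit at 0⁺
  have hbot : Tendsto f (𝓝[>] (0:ℝ)) (𝓝 0) := by
    have hsinc : Tendsto (fun u : ℝ => Real.sin u / u) (𝓝[≠] (0:ℝ)) (𝓝 1) := by
      have h := Real.hasDerivAt_sin 0
      rw [hasDerivAt_iff_tendsto_slope] at h
      simp only [Real.cos_zero] at h
      have heq : slope Real.sin 0 = fun u : ℝ => Real.sin u / u := by
        funext u
        rw [slope_def_field]
        simp
      rwa [heq] at h
    have hxy : Tendsto (fun l : ℝ => l * γ) (𝓝[>] (0:ℝ)) (𝓝[≠] (0:ℝ)) := by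
      apply tendsto_nhdsWithin_of_tendsto_nhds_of_eventually_within
      · have h : Tendsto (fun l : ℝ => l * γ) (𝓝 0) (𝓝 (0 * γ)) :=
          (continuous_id.mul continuous_const).tendsto 0
        simpa using h.mono_left nhdsWithin_le_nhds
      · filter_upwards [self_mem_nhdsWithin] with l hl
        simp only [mem_compl_iff, mem_singleton_iff]
        exact ne_of_gt (mul_pos hl hγ)
    have hsinc2 : Tendsto (fun l : ℝ => Real.sin (l*γ) / (l*γ)) (𝓝[>] (0:ℝ)) (𝓝 1) :=
      hsinc.comp hxy
    have hcos1 : Tendsto (fun l : ℝ => Real.cos (l*γ)) (𝓝[>] (0:ℝ)) (𝓝 1) := by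
      have h : Continuous fun l : ℝ => Real.cos (l*γ) :=
        Real.continuous_cos.comp (continuous_id.mul continuous_const)
      have := (h.tendsto 0).mono_left (nhdsWithin_le_nhds (s := Ioi (0:ℝ)))
      simpa using this
    have hg : Tendsto (fun l : ℝ => (1/2 : ℝ) * (γ / (Real.cos (l*γ))^2
        - (Real.sin (l*γ)/(l*γ)) * (γ / Real.cos (l*γ)))) (𝓝[>] (0:ℝ))
        (𝓝 ((1/2 : ℝ) * (γ / (1:ℝ)^2 - 1 * (γ/1)))) := by
      apply Tendsto.const_mul
      exact (tendsto_const_nhds.div (hcos1.pow 2) (by norm_num)).sub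
        (hsinc2.mul (tendsto_const_nhds.div hcos1 one_ne_zero))
    have hval : ((1/2 : ℝ) * (γ / (1:ℝ)^2 - 1 * (γ/1))) = 0 := by norm_num
    rw [hval] at hg
    apply hg.congr'
    filter_upwards [self_mem_nhdsWithin] with l hl
    have hl0 : l ≠ 0 := ne_of_gt hl
    have : Real.sin (l*γ)/(l*γ) * (γ / Real.cos (l*γ)) = Real.sin (l*γ) / (l * Real.cos (l*γ)) := by
      rcases eq_or_ne (Real.cos (l*γ)) 0 with h|h
      · simp [h]
      · field_simp
    rw [hf l, ← this]
  -- limit at c⁻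
  have htop : Tendsto f (𝓝[<] c) atTop := by
    have hnum : Tendsto (fun l : ℝ => l * γ - Real.sin (l*γ) * Real.cos (l*γ)) (𝓝[<] c)
        (𝓝 (π/2)) := by
      have h : Continuous fun l : ℝ => l * γ - Real.sin (l*γ) * Real.cos (l*γ) := by
        fun_prop
      have h2 := (h.tendsto c).mono_left (nhdsWithin_le_nhds (s := Iio c))
      have hval : c * γ - Real.sin (c*γ) * Real.cos (c*γ) = π/2 := by
        rw [hcγ, Real.cos_pi_div_two]
        ring
      rwa [hval] at h2
    have hden : Tendsto (fun l : ℝ => 2*l*(Real.cos (l*γ))^2) (𝓝[<] c) (𝓝[>] (0:ℝ)) := by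
      apply tendsto_nhdsWithin_of_tendsto_nhds_of_eventually_within
      · have h : Continuous fun l : ℝ => 2*l*(Real.cos (l*γ))^2 := by fun_prop
        have h2 := (h.tendsto c).mono_left (nhdsWithin_le_nhds (s := Iio c))
        have hval : 2*c*(Real.cos (c*γ))^2 = 0 := by
          rw [hcγ, Real.cos_pi_div_two]; ring
        rwa [hval] at h2
      · filter_upwards [Ioo_mem_nhdsLT_of_mem (⟨hc0, le_refl c⟩ : c ∈ Ioc 0 c)] with l hl
        obtain ⟨hl0, hx0, hx2, hco, _⟩ := basic l hl
        have : 0 < 2*l*(Real.cos (l*γ))^2 := by positivity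
        exact this
    have h := Filter.Tendsto.pos_mul_atTop (by positivity : (0:ℝ) < π/2) hnum
      hden.inv_tendsto_nhdsGT_zero
    apply h.congr'
    filter_upwards [Ioo_mem_nhdsLT_of_mem (⟨hc0, le_refl c⟩ : c ∈ Ioc 0 c)] with l hl
    obtain ⟨hl0, hx0, hx2, hco, _⟩ := basic l hl
    rw [hf l]
    have hl0' : l ≠ 0 := ne_of_gt hl0
    have hco' : Real.cos (l*γ) ≠ 0 := ne_of_gt hco
    simp only [Pi.inv_apply]
    field_simp
  -- surjectivity
  have hsurj : SurjOn f (Ioo 0 c) (Ioi 0) := by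
    intro y hy
    simp only [mem_Ioi] at hy
    have ha : ∃ a, a ∈ Ioo (0:ℝ) c ∧ f a < y := by
      have h1 := hbot.eventually_lt_const hy
      have h2 : ∀ᶠ l in 𝓝[>] (0:ℝ), l ∈ Ioo (0:ℝ) c :=
        Ioo_mem_nhdsGT_of_mem ⟨le_refl 0, hc0⟩
      exact (h2.and h1).exists
    have hb : ∃ b, b ∈ Ioo (0:ℝ) c ∧ y < f b := by
      have h1 := htop.eventually_gt_atTop y
      have h2 : ∀ᶠ l in 𝓝[<] c, l ∈ Ioo (0:ℝ) c :=
        Ioo_mem_nhdsLT_of_mem ⟨hc0, le_refl c⟩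
      exact (h2.and h1).exists
    obtain ⟨a, ha1, ha2⟩ := ha
    obtain ⟨b, hb1, hb2⟩ := hb
    have hab : a ≤ b := by
      by_contra h
      push_neg at h
      have := hmonof hb1 ha1 h
      linarith
    have hsub : Icc a b ⊆ Ioo 0 c := fun x hx =>
      ⟨lt_of_lt_of_le ha1.1 hx.1, lt_of_le_of_lt hx.2 hb1.2⟩
    have hcontf : ContinuousOn f (Icc a b) := by
      apply ContinuousOn.congr (hcont.mono hsub)
      intro x _
      exact hf x
    have hmem : y ∈ Icc (f a) (f b) := ⟨le_of_lt ha2, le_of_lt hb2⟩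
    obtain ⟨l, hl, hfl⟩ := intermediate_value_Icc hab hcontf hmem
    exact ⟨l, hsub hl, hfl⟩
  exact ⟨hmonof, hmaps, hmonof.injOn, hsurj⟩
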